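/- Let k be a field, A a unital associative k-algebra, and u ∈ A. Suppose u admits a Jordan–Chevalley decomposition (d, s) in which d = P(u) for some polynomial P ∈ k[x]. Then this decomposition is unique: if (d', s') is any Jordan–Chevalley decomposition of u, then d' = d and s' = s. -/

import Mathlib

open Polynomial

/-- An element of a `k`-algebra is absolutely semisimple if it has a separable
annihilating polynomial. -/
def AbsSemisimple (k : Type*) [Field k] {A : Type*} [Ring A] [Algebra k A] (u : A) : Prop :=
  ∃ f : k[X], f.Separable ∧ aeval u f = 0

/-- A Jordan–Chevalley decomposition of `u` is a pair `(d, s)` with `d` absolutely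
semisimple, `s` nilpotent, `u = d + s` and `d s = s d`. -/
def IsJordanChevalley (k : Type*) [Field k] {A : Type*} [Ring A] [Algebra k A]
    (u d s : A) : Prop :=
  AbsSemisimple k d ∧ IsNilpotent s ∧ u = d + s ∧ d * s = s * d

theorem jordan_chevalley_unique_of_polynomial
    {k : Type*} [Field k] {A : Type*} [Ring A] [Algebra k A]
    (u d s : A) (hds : IsJordanChevalley k u d s)
    (P : k[X]) (hdP : d = aeval u P) :
    ∀ d' s' : A, IsJordanChevalley k u d' s' → d' = d ∧ s' = s := by
  classical
  intro d' s' hds'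
  obtain ⟨⟨f, hf, hfd⟩, hsnil, hu, hcomm⟩ := hds
  obtain ⟨⟨g, hg, hgd'⟩, hs'nil, hu', hcomm'⟩ := hds'
  -- `u` and `d'` commute
  have hud' : u * d' = d' * u := by
    rw [hu', add_mul, mul_add, hcomm']
  -- Work in the commutative subalgebra generated by `u` and `d'`.
  set B := Algebra.adjoin k ({u, d'} : Set A) with hB
  letI : CommRing B := Algebra.adjoinCommRingOfComm k (by
    intro a ha b hb
    simp only [Set.mem_insert_iff, Set.mem_singleton_iff] at ha hb
    rcases ha with rfl | rfl <;> rcases hb with rfl | rfl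
    · rfl
    · exact hud'
    · exact hud'.symm
    · rfl)
  have hUmem : u ∈ B := Algebra.subset_adjoin (by simp)
  have hD'mem : d' ∈ B := Algebra.subset_adjoin (by simp)
  set U : B := ⟨u, hUmem⟩ with hU
  set D' : B := ⟨d', hD'mem⟩ with hD'
  set D : B := aeval U P with hDdef
  have hDcoe : (D : A) = d := by
    rw [hDdef, hdP]
    exact (aeval_algHom_apply B.val U P).symm
  set S : B := U - D with hS
  set S' : B := U - D' with hS'
  have hScoe : (S : A) = s := by
    rw [hS]
    push_cast
    rw [hDcoe]; show u - d = s; rw [hu, add_sub_cancel_left]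
  have hS'coe : (S' : A) = s' := by
    rw [hS']
    push_cast
    show u - d' = s'; rw [hu', add_sub_cancel_left]
  -- transfer nilpotency into `B`
  have nil_of_coe : ∀ (x : B), IsNilpotent (x : A) → IsNilpotent x := by
    rintro x ⟨n, hn⟩
    refine ⟨n, Subtype.ext ?_⟩
    push_cast
    rw [hn]
  have hSnilB : IsNilpotent S := nil_of_coe S (hScoe ▸ hsnil)
  have hS'nilB : IsNilpotent S' := nil_of_coe S' (hS'coe ▸ hs'nil)
  set N : B := D - D' with hN
  have hNeq : N = S' - S := by rw [hN, hS, hS']; ring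
  have hNnil : IsNilpotent N := by
    rw [hNeq]
    exact (Commute.all _ _).isNilpotent_sub hS'nilB hSnilB
  -- `f(D) = 0` and `g(D') = 0` in `B`
  have hfD : aeval D f = 0 := by
    refine Subtype.ext ?_
    have h1 : aeval (B.val D) f = B.val (aeval D f) := aeval_algHom_apply B.val D f
    have h2 : (B.val D : A) = d := hDcoe
    rw [h2, hfd] at h1
    rw [ZeroMemClass.coe_zero]
    exact h1.symm
  have hgD' : aeval D' g = 0 := by
    refine Subtype.ext ?_
    have h1 : aeval (B.val D') g = B.val (aeval D' g) := aeval_algHom_apply B.val D' g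
    have h2 : (B.val D' : A) = d' := rfl
    rw [h2, hgd'] at h1
    rw [ZeroMemClass.coe_zero]
    exact h1.symm
  -- `g(D)` is nilpotent since it differs from `g(D') = 0` by a multiple of `N`
  have hgDnil : IsNilpotent (aeval D g) := by
    have hdvd : (D - D') ∣ aeval D g - aeval D' g := by
      simpa [aeval_def] using sub_dvd_eval_sub D D' (g.map (algebraMap k B))
    rw [hgD', sub_zero] at hdvd
    obtain ⟨c, hc⟩ := hdvd
    rw [hc]
    exact (Commute.all _ _).isNilpotent_mul_right hNnil
  -- hence `g(D) = 0`, using the squarefree annihilating polynomial `f`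
  have hgD : aeval D g = 0 := by
    obtain ⟨m, hm⟩ := hgDnil
    have hhD : aeval D (EuclideanDomain.gcd f (g ^ (m + 1))) = 0 := by
      rw [EuclideanDomain.gcd_eq_gcd_ab f (g ^ (m + 1))]
      simp [hfD, map_pow, pow_succ, hm]
    have hhsq : Squarefree (EuclideanDomain.gcd f (g ^ (m + 1))) :=
      Squarefree.squarefree_of_dvd (EuclideanDomain.gcd_dvd_left f (g ^ (m + 1))) hf.squarefree
    have hhg : EuclideanDomain.gcd f (g ^ (m + 1)) ∣ g :=
      (hhsq.dvd_pow_iff_dvd (Nat.succ_ne_zero m)).mp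
        (EuclideanDomain.gcd_dvd_right f (g ^ (m + 1)))
    obtain ⟨w, hw⟩ := hhg
    rw [hw, map_mul, hhD, zero_mul]
  -- `g'(D)` is a unit, by separability
  have hgDunit : IsUnit (aeval D (derivative g)) := by
    obtain ⟨a, b, hab⟩ := hg
    have h3 := congrArg (aeval D) hab
    rw [map_add, map_mul, map_mul, hgD, mul_zero, zero_add, map_one] at h3
    exact IsUnit.of_mul_eq_one _ ((mul_comm _ _).trans h3)
  -- Newton uniqueness: `D` and `D'` are both roots of `g` within nilpotent distance of `D`
  obtain ⟨r, -, hruniq⟩ :=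
    existsUnique_nilpotent_sub_and_aeval_eq_zero (P := g) (x := D)
      ⟨1, by rw [pow_one]; exact hgD⟩ hgDunit
  have h1 : D = r := hruniq D ⟨⟨1, by rw [pow_one, sub_self]⟩, hgD⟩
  have h2 : D' = r := hruniq D' ⟨hNnil, hgD'⟩
  have hDD' : D = D' := h1.trans h2.symm
  have hd'd : d' = d := by
    have h4 := congrArg (B.val) hDD'
    rw [show (B.val D : A) = d from hDcoe] at h4
    exact h4.symm
  refine ⟨hd'd, ?_⟩
  have h5 : d + s = d' + s' := hu.symm.trans hu'
  rw [hd'd] at h5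
  exact (add_left_cancel h5).symm
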